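/- Congruences and complements in a bounded distributive lattice: let L be a distributive lattice with a bounded order (least element ⊥ and greatest element ⊤) and let a, b : L. Then every lattice congruence on L that relates a and b also relates ⊥ and ⊤ if and only if a and b are complements, i.e. a ⊓ b = ⊥ and a ⊔ b = ⊤. -/
import Mathlib


/-- A lattice congruence: an equivalence relation compatible with meet and join. -/
structure IsLatticeCongruence {L : Type*} [Lattice L] (r : L → L → Prop) : Prop where
  equiv : Equivalence r
  inf_compat : ∀ a b c d, r a b → r c d → r (a ⊓ c) (b ⊓ d)
  sup_compat : ∀ a b c d, r a b → r c d → r (a ⊔ c) (b ⊔ d)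

/-- In a bounded distributive lattice, every lattice congruence
relating `a` and `b` also relates `⊥` and `⊤` iff `a` and `b` are complements. -/
theorem stmt10 {L : Type*} [DistribLattice L] [BoundedOrder L] (a b : L) :
    (∀ r : L → L → Prop, IsLatticeCongruence r → r a b → r (⊥ : L) (⊤ : L)) ↔
      (a ⊓ b = ⊥ ∧ a ⊔ b = ⊤) := by
  constructor
  · intro h
    set c := a ⊓ b with hc
    set d := a ⊔ b with hd
    set r : L → L → Prop := fun x y => x ⊓ c = y ⊓ c ∧ x ⊔ d = y ⊔ d with hr
    have hcong : IsLatticeCongruence r := by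
      refine ⟨⟨fun x => ⟨rfl, rfl⟩, fun h => ⟨h.1.symm, h.2.symm⟩,
        fun h1 h2 => ⟨h1.1.trans h2.1, h1.2.trans h2.2⟩⟩, ?_, ?_⟩
      · intro x y z w h1 h2
        constructor
        · calc x ⊓ z ⊓ c = (x ⊓ c) ⊓ (z ⊓ c) := inf_inf_distrib_right x z c
            _ = (y ⊓ c) ⊓ (w ⊓ c) := by rw [h1.1, h2.1]
            _ = y ⊓ w ⊓ c := (inf_inf_distrib_right y w c).symm
        · calc x ⊓ z ⊔ d = (x ⊔ d) ⊓ (z ⊔ d) := sup_inf_right x z d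
            _ = (y ⊔ d) ⊓ (w ⊔ d) := by rw [h1.2, h2.2]
            _ = y ⊓ w ⊔ d := (sup_inf_right y w d).symm
      · intro x y z w h1 h2
        constructor
        · calc (x ⊔ z) ⊓ c = (x ⊓ c) ⊔ (z ⊓ c) := inf_sup_right x z c
            _ = (y ⊓ c) ⊔ (w ⊓ c) := by rw [h1.1, h2.1]
            _ = (y ⊔ w) ⊓ c := (inf_sup_right y w c).symm
        · calc x ⊔ z ⊔ d = (x ⊔ d) ⊔ (z ⊔ d) := sup_sup_distrib_right x z d
            _ = (y ⊔ d) ⊔ (w ⊔ d) := by rw [h1.2, h2.2]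
            _ = y ⊔ w ⊔ d := (sup_sup_distrib_right y w d).symm
    have hrab : r a b := by
      constructor
      · simp [hc, ← inf_assoc, inf_comm b a]
      · simp [hd, ← sup_assoc]
    have := h r hcong hrab
    obtain ⟨h1, h2⟩ := this
    simp only [bot_inf_eq, top_inf_eq, bot_sup_eq, top_sup_eq] at h1 h2
    exact ⟨h1.symm, h2⟩
  · rintro ⟨hinf, hsup⟩ r hcong hab
    have h1 : r (a ⊓ b) b := by
      have := hcong.inf_compat a b b b hab (hcong.equiv.refl b)
      simpa using this
    have h2 : r (a ⊔ b) b := by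
      have := hcong.sup_compat a b b b hab (hcong.equiv.refl b)
      simpa using this
    rw [hinf] at h1
    rw [hsup] at h2
    exact hcong.equiv.trans h1 (hcong.equiv.symm h2)
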